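/- arXiv:1802.05122 — 2 statements merged into one kernel-verified Lean document; each statement's English description precedes it below -/
import Mathlib

section
/- Let 0 ≤ λ, μ ≤ 1/2 and define F : ℝ → ℝ by F(x) = 0 for x < 0; F(x) = 1 − 2(λ+μ)cos(πx) + 2(2cos(πx) − πx·sin(πx))·λμ for 0 ≤ x < 1/2; F(x) = 1 + 2π(x−1)·λμ·sin(πx) for 1/2 ≤ x < 1; and F(x) = 1 for x ≥ 1. Then F is monotone nondecreasing, right-continuous, F(−∞) = 0 and F(+∞) = 1, i.e. F is a cumulative distribution function. -/
open Real Set Filter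

private lemma tcos_le_sin {t : ℝ} (ht0 : 0 ≤ t) (ht1 : t ≤ Real.pi / 2) :
    t * Real.cos t ≤ Real.sin t := by
  have hmono : MonotoneOn (fun t => Real.sin t - t * Real.cos t) (Icc 0 (Real.pi / 2)) := by
    apply monotoneOn_of_deriv_nonneg (convex_Icc _ _)
    · exact (Real.continuous_sin.sub (continuous_id.mul Real.continuous_cos)).continuousOn
    · intro x hx
      exact ((Real.hasDerivAt_sin x).sub
        ((hasDerivAt_id x).mul (Real.hasDerivAt_cos x))).differentiableAt.differentiableWithinAt
    · intro x hx
      rw [interior_Icc] at hx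
      have hd : HasDerivAt (fun t => Real.sin t - t * Real.cos t) (x * Real.sin x) x := by
        have h := (Real.hasDerivAt_sin x).sub ((hasDerivAt_id x).mul (Real.hasDerivAt_cos x))
        have : x * Real.sin x = Real.cos x - (1 * Real.cos x + x * (-Real.sin x)) := by ring
        rw [this]; exact h
      rw [hd.deriv]
      have hs : 0 ≤ Real.sin x :=
        Real.sin_nonneg_of_nonneg_of_le_pi hx.1.le (by linarith [Real.pi_pos, hx.2])
      exact mul_nonneg hx.1.le hs
  have h0 : (0:ℝ) ∈ Icc 0 (Real.pi / 2) := ⟨le_refl _, by positivity⟩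
  have := hmono h0 ⟨ht0, ht1⟩ ht0
  simp at this
  linarith


private noncomputable def gfun (lam mu : ℝ) : ℝ → ℝ := fun x =>
  1 - 2 * (lam + mu) * Real.cos (Real.pi * x) +
    2 * (2 * Real.cos (Real.pi * x) - Real.pi * x * Real.sin (Real.pi * x)) * (lam * mu)

private noncomputable def hfun (lam mu : ℝ) : ℝ → ℝ := fun x =>
  1 + 2 * Real.pi * (x - 1) * (lam * mu) * Real.sin (Real.pi * x)

private lemma pix_hasDeriv (x : ℝ) : HasDerivAt (fun y : ℝ => Real.pi * y) Real.pi x := by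
  simpa using (hasDerivAt_id x).const_mul Real.pi

private lemma gfun_hasDeriv (lam mu x : ℝ) :
    HasDerivAt (gfun lam mu)
      (2 * Real.pi * ((lam + mu) - 3 * (lam * mu)) * Real.sin (Real.pi * x)
        - 2 * (lam * mu) * (Real.pi * x) * Real.cos (Real.pi * x) * Real.pi) x := by
  have h1 := pix_hasDeriv x
  have hcos := h1.cos
  have hsin := h1.sin
  have hterm := h1.mul hsin
  have htot := ((hasDerivAt_const x (1:ℝ)).sub (hcos.const_mul (2*(lam+mu)))).add
    ((((hcos.const_mul 2).sub hterm).const_mul 2).mul_const (lam*mu))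
  have heq : 2 * Real.pi * ((lam + mu) - 3 * (lam * mu)) * Real.sin (Real.pi * x)
        - 2 * (lam * mu) * (Real.pi * x) * Real.cos (Real.pi * x) * Real.pi
      = 0 - 2 * (lam + mu) * (-Real.sin (Real.pi * x) * Real.pi) +
        2 * (2 * (-Real.sin (Real.pi * x) * Real.pi) -
          (Real.pi * Real.sin (Real.pi * x) + Real.pi * x * (Real.cos (Real.pi * x) * Real.pi)))
          * (lam * mu) := by ring
  rw [heq]
  exact htot

private lemma hfun_hasDeriv (lam mu x : ℝ) :
    HasDerivAt (hfun lam mu)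
      (2 * Real.pi * (lam * mu) * Real.sin (Real.pi * x)
        + 2 * Real.pi * (x - 1) * (lam * mu) * (Real.cos (Real.pi * x) * Real.pi)) x := by
  have h1 := pix_hasDeriv x
  have hsin := h1.sin
  have hx1 : HasDerivAt (fun y : ℝ => 2 * Real.pi * (y - 1) * (lam * mu))
      (2 * Real.pi * (lam * mu)) x := by
    have := (((hasDerivAt_id x).sub_const 1).const_mul (2 * Real.pi)).mul_const (lam * mu)
    simpa using this
  have htot := (hasDerivAt_const x (1:ℝ)).add (hx1.mul hsin)
  have heq : 2 * Real.pi * (lam * mu) * Real.sin (Real.pi * x)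
        + 2 * Real.pi * (x - 1) * (lam * mu) * (Real.cos (Real.pi * x) * Real.pi)
      = 0 + (2 * Real.pi * (lam * mu) * Real.sin (Real.pi * x)
        + 2 * Real.pi * (x - 1) * (lam * mu) * (Real.cos (Real.pi * x) * Real.pi)) := by ring
  rw [heq]
  exact htot

private lemma gfun_mono {lam mu : ℝ} (hl0 : 0 ≤ lam) (hl1 : lam ≤ 1/2)
    (hm0 : 0 ≤ mu) (hm1 : mu ≤ 1/2) :
    MonotoneOn (gfun lam mu) (Icc 0 (1/2)) := by
  apply monotoneOn_of_deriv_nonneg (convex_Icc _ _)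
  · exact fun x _ => ((gfun_hasDeriv lam mu x).continuousAt).continuousWithinAt
  · exact fun x _ => (gfun_hasDeriv lam mu x).differentiableAt.differentiableWithinAt
  · intro x hx
    rw [interior_Icc] at hx
    rw [(gfun_hasDeriv lam mu x).deriv]
    set t := Real.pi * x with ht
    have hpi := Real.pi_pos
    have ht0 : 0 ≤ t := mul_nonneg hpi.le hx.1.le
    have ht1 : t ≤ Real.pi / 2 := by
      rw [ht]; nlinarith [hx.2]
    have hts : t * Real.cos t ≤ Real.sin t := tcos_le_sin ht0 ht1
    have hcn : 0 ≤ Real.cos t := Real.cos_nonneg_of_mem_Icc ⟨by linarith, ht1⟩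
    have hAB : lam * mu ≤ (lam + mu) - 4 * (lam * mu) + lam * mu - 0 := by
      nlinarith [mul_nonneg hl0 (by linarith : (0:ℝ) ≤ 1 - 2*mu),
        mul_nonneg hm0 (by linarith : (0:ℝ) ≤ 1 - 2*lam)]
    -- A = lam+mu-3 lam mu ≥ B = lam mu ≥ 0
    have hA : lam * mu ≤ (lam + mu) - 3 * (lam * mu) := by
      nlinarith [mul_nonneg hl0 (by linarith : (0:ℝ) ≤ 1 - 2*mu),
        mul_nonneg hm0 (by linarith : (0:ℝ) ≤ 1 - 2*lam)]
    have hB : 0 ≤ lam * mu := mul_nonneg hl0 hm0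
    have htc : 0 ≤ t * Real.cos t := mul_nonneg ht0 hcn
    nlinarith [mul_le_mul_of_nonneg_left hts (by linarith : (0:ℝ) ≤ (lam+mu) - 3*(lam*mu)),
      mul_le_mul_of_nonneg_right hA htc]

private lemma hfun_mono {lam mu : ℝ} (hl0 : 0 ≤ lam) (hm0 : 0 ≤ mu) :
    MonotoneOn (hfun lam mu) (Icc (1/2) 1) := by
  apply monotoneOn_of_deriv_nonneg (convex_Icc _ _)
  · exact fun x _ => ((hfun_hasDeriv lam mu x).continuousAt).continuousWithinAt
  · exact fun x _ => (hfun_hasDeriv lam mu x).differentiableAt.differentiableWithinAt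
  · intro x hx
    rw [interior_Icc] at hx
    rw [(hfun_hasDeriv lam mu x).deriv]
    have hpi := Real.pi_pos
    have hs : 0 ≤ Real.sin (Real.pi * x) :=
      Real.sin_nonneg_of_nonneg_of_le_pi (by nlinarith [hx.1]) (by nlinarith [hx.2])
    have hc : Real.cos (Real.pi * x) ≤ 0 :=
      Real.cos_nonpos_of_pi_div_two_le_of_le (by nlinarith [hx.1]) (by nlinarith [hx.2])
    have hB : 0 ≤ lam * mu := mul_nonneg hl0 hm0
    have h1 : 0 ≤ 2 * Real.pi * (lam * mu) * Real.sin (Real.pi * x) := by positivity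
    have h2 : 0 ≤ 2 * Real.pi * (x - 1) * (lam * mu) * (Real.cos (Real.pi * x) * Real.pi) := by
      have hx1 : x - 1 ≤ 0 := by linarith [hx.2]
      have hcp : Real.cos (Real.pi * x) * Real.pi ≤ 0 := by nlinarith
      have hxx : (0:ℝ) ≤ 1 - x := by linarith [hx.2]
      have ha : 2 * Real.pi * (x - 1) * (lam * mu) ≤ 0 := by
        nlinarith [mul_nonneg (mul_nonneg (mul_nonneg (by norm_num : (0:ℝ) ≤ 2) hpi.le) hxx) hB]
      nlinarith [mul_nonneg (neg_nonneg.2 ha) (neg_nonneg.2 hcp)]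
    linarith

private lemma gfun_zero {lam mu : ℝ} (hl1 : lam ≤ 1/2) (hm1 : mu ≤ 1/2) :
    0 ≤ gfun lam mu 0 := by
  unfold gfun
  simp [mul_zero, Real.cos_zero, Real.sin_zero]
  nlinarith [mul_nonneg (by linarith : (0:ℝ) ≤ 1 - 2*lam) (by linarith : (0:ℝ) ≤ 1 - 2*mu)]

private lemma gfun_half (lam mu : ℝ) : gfun lam mu (1/2) = 1 - Real.pi * (lam * mu) := by
  unfold gfun
  rw [mul_one_div, Real.cos_pi_div_two, Real.sin_pi_div_two]
  ring

private lemma hfun_half (lam mu : ℝ) : hfun lam mu (1/2) = 1 - Real.pi * (lam * mu) := by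
  unfold hfun
  rw [mul_one_div, Real.sin_pi_div_two]
  ring

private lemma hfun_one (lam mu : ℝ) : hfun lam mu 1 = 1 := by
  unfold hfun
  rw [mul_one, Real.sin_pi]
  ring

theorem stmt_9 (lam mu : ℝ) (hl0 : 0 ≤ lam) (hl1 : lam ≤ 1/2)
    (hm0 : 0 ≤ mu) (hm1 : mu ≤ 1/2)
    (F : ℝ → ℝ)
    (hF : ∀ x : ℝ, F x =
      if x < 0 then 0
      else if x < 1/2 then
        1 - 2 * (lam + mu) * Real.cos (Real.pi * x) +
          2 * (2 * Real.cos (Real.pi * x) - Real.pi * x * Real.sin (Real.pi * x)) * (lam * mu)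
      else if x < 1 then 1 + 2 * Real.pi * (x - 1) * (lam * mu) * Real.sin (Real.pi * x)
      else 1) :
    Monotone F ∧
    (∀ x : ℝ, ContinuousWithinAt F (Set.Ici x) x) ∧
    Filter.Tendsto F Filter.atBot (nhds 0) ∧
    Filter.Tendsto F Filter.atTop (nhds 1) := by
  have hpi := Real.pi_pos
  -- region value lemmas
  have hF0 : ∀ x : ℝ, x < 0 → F x = 0 := by
    intro x hx; rw [hF x, if_pos hx]
  have hFg : ∀ x : ℝ, 0 ≤ x → x < 1/2 → F x = gfun lam mu x := by
    intro x h1 h2; rw [hF x, if_neg (not_lt.2 h1), if_pos h2]; rfl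
  have hFh : ∀ x : ℝ, 1/2 ≤ x → x < 1 → F x = hfun lam mu x := by
    intro x h1 h2
    rw [hF x, if_neg (not_lt.2 (by linarith)), if_neg (not_lt.2 h1), if_pos h2]; rfl
  have hF1 : ∀ x : ℝ, 1 ≤ x → F x = 1 := by
    intro x h1
    rw [hF x, if_neg (not_lt.2 (by linarith)), if_neg (not_lt.2 (by linarith)),
      if_neg (not_lt.2 h1)]
  have hgm := gfun_mono hl0 hl1 hm0 hm1
  have hhm := hfun_mono (lam := lam) (mu := mu) hl0 hm0
  have hmemg0 : (0:ℝ) ∈ Icc (0:ℝ) (1/2) := by constructor <;> norm_num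
  have hmemg1 : (1/2:ℝ) ∈ Icc (0:ℝ) (1/2) := by constructor <;> norm_num
  have hmemh0 : (1/2:ℝ) ∈ Icc (1/2:ℝ) 1 := by constructor <;> norm_num
  have hmemh1 : (1:ℝ) ∈ Icc (1/2:ℝ) 1 := by constructor <;> norm_num
  -- c := value at 1/2
  have hchain : gfun lam mu (1/2) = hfun lam mu (1/2) := by
    rw [gfun_half, hfun_half]
  have hcle1 : hfun lam mu (1/2) ≤ 1 := by
    have := hhm hmemh0 hmemh1 (by norm_num)
    rwa [hfun_one] at this
  have hg0 := gfun_zero hl1 hm1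
  have hg0c : gfun lam mu 0 ≤ gfun lam mu (1/2) := hgm hmemg0 hmemg1 (by norm_num)
  -- bounds on F in each region
  have hFlow : ∀ x : ℝ, 0 ≤ F x := by
    intro x
    rcases lt_or_ge x 0 with hx | hx
    · rw [hF0 x hx]
    · rcases lt_or_ge x (1/2) with hx2 | hx2
      · rw [hFg x hx hx2]
        have := hgm hmemg0 ⟨hx, hx2.le⟩ hx
        linarith
      · rcases lt_or_ge x 1 with hx3 | hx3
        · rw [hFh x hx2 hx3]
          have := hhm hmemh0 ⟨hx2, hx3.le⟩ hx2
          rw [hfun_half] at this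
          rw [gfun_half] at hg0c
          linarith
        · rw [hF1 x hx3]; norm_num
  have hFhigh : ∀ x : ℝ, F x ≤ 1 := by
    intro x
    rcases lt_or_ge x 0 with hx | hx
    · rw [hF0 x hx]; norm_num
    · rcases lt_or_ge x (1/2) with hx2 | hx2
      · rw [hFg x hx hx2]
        have := hgm ⟨hx, hx2.le⟩ hmemg1 hx2.le
        rw [hchain] at this
        linarith
      · rcases lt_or_ge x 1 with hx3 | hx3
        · rw [hFh x hx2 hx3]
          have := hhm ⟨hx2, hx3.le⟩ hmemh1 hx3.le
          rwa [hfun_one] at this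
        · rw [hF1 x hx3]
  constructor
  · -- Monotone
    intro a b hab
    rcases lt_or_ge a 0 with ha | ha
    · rw [hF0 a ha]; exact hFlow b
    rcases lt_or_ge a (1/2) with ha2 | ha2
    · rw [hFg a ha ha2]
      rcases lt_or_ge b (1/2) with hb2 | hb2
      · rw [hFg b (le_trans ha hab) hb2]
        exact hgm ⟨ha, ha2.le⟩ ⟨le_trans ha hab, hb2.le⟩ hab
      · have h1 : gfun lam mu a ≤ hfun lam mu (1/2) := by
          rw [← hchain]; exact hgm ⟨ha, ha2.le⟩ hmemg1 ha2.le
        rcases lt_or_ge b 1 with hb3 | hb3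
        · rw [hFh b hb2 hb3]
          exact le_trans h1 (hhm hmemh0 ⟨hb2, hb3.le⟩ hb2)
        · rw [hF1 b hb3]; linarith
    rcases lt_or_ge a 1 with ha3 | ha3
    · rw [hFh a ha2 ha3]
      rcases lt_or_ge b 1 with hb3 | hb3
      · rw [hFh b (le_trans ha2 hab) hb3]
        exact hhm ⟨ha2, ha3.le⟩ ⟨le_trans ha2 hab, hb3.le⟩ hab
      · rw [hF1 b hb3]
        have := hhm ⟨ha2, ha3.le⟩ hmemh1 ha3.le
        rwa [hfun_one] at this
    · rw [hF1 a ha3, hF1 b (le_trans ha3 hab)]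
  refine ⟨?_, ?_, ?_⟩
  · -- right continuity
    intro x
    rcases lt_or_ge x 0 with hx | hx
    · have hev : ∀ᶠ y in nhdsWithin x (Ici x), F y = 0 := by
        filter_upwards [mem_nhdsWithin_of_mem_nhds (Iio_mem_nhds hx)] with y hy
        exact hF0 y hy
      exact (continuousWithinAt_const (b := (0:ℝ))).congr_of_eventuallyEq hev (hF0 x hx)
    rcases lt_or_ge x (1/2) with hx2 | hx2
    · have hcont : ContinuousWithinAt (gfun lam mu) (Ici x) x :=
        ((gfun_hasDeriv lam mu x).continuousAt).continuousWithinAt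
      have hev : ∀ᶠ y in nhdsWithin x (Ici x), F y = gfun lam mu y := by
        filter_upwards [mem_nhdsWithin_of_mem_nhds (Iio_mem_nhds hx2),
          self_mem_nhdsWithin] with y hy1 hy2
        exact hFg y (le_trans hx hy2) hy1
      exact hcont.congr_of_eventuallyEq hev (hFg x hx hx2)
    rcases lt_or_ge x 1 with hx3 | hx3
    · have hcont : ContinuousWithinAt (hfun lam mu) (Ici x) x :=
        ((hfun_hasDeriv lam mu x).continuousAt).continuousWithinAt
      have hev : ∀ᶠ y in nhdsWithin x (Ici x), F y = hfun lam mu y := by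
        filter_upwards [mem_nhdsWithin_of_mem_nhds (Iio_mem_nhds hx3),
          self_mem_nhdsWithin] with y hy1 hy2
        exact hFh y (le_trans hx2 hy2) hy1
      exact hcont.congr_of_eventuallyEq hev (hFh x hx2 hx3)
    · have hev : ∀ᶠ y in nhdsWithin x (Ici x), F y = 1 := by
        filter_upwards [self_mem_nhdsWithin] with y hy
        exact hF1 y (le_trans hx3 hy)
      exact (continuousWithinAt_const (b := (1:ℝ))).congr_of_eventuallyEq hev (hF1 x hx3)
  · -- atBot
    have hev : F =ᶠ[Filter.atBot] (fun _ => (0:ℝ)) := by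
      filter_upwards [Filter.eventually_lt_atBot (0:ℝ)] with y hy
      exact hF0 y hy
    exact Filter.Tendsto.congr' hev.symm tendsto_const_nhds
  · -- atTop
    have hev : F =ᶠ[Filter.atTop] (fun _ => (1:ℝ)) := by
      filter_upwards [Filter.eventually_ge_atTop (1:ℝ)] with y hy
      exact hF1 y hy
    exact Filter.Tendsto.congr' hev.symm tendsto_const_nhds
end

section
/- Let 0 ≤ λ, μ ≤ 1/2 and let F be the distribution function as above. Then for each k ≥ 1, the k-th moment of F satisfies ∫ x^k dF(x) = [2π(λ+μ) − 6πλμ]·∫_{0}^{1/2} x^k·sin(πx) dx − 2π²λμ·∫_{0}^{1/2} x^{k+1}·cos(πx) dx + 2πλμ·∫_{1/2}^{1} x^k·[sin(πx) − π(1−x)cos(πx)] dx. -/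
open MeasureTheory Set Real

namespace Stmt11

noncomputable def f1 (lam mu x : ℝ) : ℝ :=
  1 - 2 * (lam + mu) * Real.cos (Real.pi * x) +
    2 * (2 * Real.cos (Real.pi * x) - Real.pi * x * Real.sin (Real.pi * x)) * (lam * mu)

noncomputable def f2 (lam mu x : ℝ) : ℝ :=
  1 + 2 * Real.pi * (x - 1) * (lam * mu) * Real.sin (Real.pi * x)

noncomputable def d1 (lam mu x : ℝ) : ℝ :=
  (2 * Real.pi * (lam + mu) - 6 * Real.pi * lam * mu) * Real.sin (Real.pi * x)
    - 2 * Real.pi ^ 2 * lam * mu * x * Real.cos (Real.pi * x)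

noncomputable def d2 (lam mu x : ℝ) : ℝ :=
  2 * Real.pi * lam * mu *
    (Real.sin (Real.pi * x) - Real.pi * (1 - x) * Real.cos (Real.pi * x))

noncomputable def g (lam mu x : ℝ) : ℝ :=
  if x ≤ 0 then 0 else if x ≤ 1/2 then d1 lam mu x else if x ≤ 1 then d2 lam mu x else 0

lemma hasDerivAt_sinpi (x : ℝ) :
    HasDerivAt (fun y => Real.sin (Real.pi * y)) (Real.pi * Real.cos (Real.pi * x)) x := by
  have h := (Real.hasDerivAt_sin (Real.pi * x)).comp x ((hasDerivAt_id x).const_mul Real.pi)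
  simpa [Function.comp_def, mul_comm] using h

lemma hasDerivAt_cospi (x : ℝ) :
    HasDerivAt (fun y => Real.cos (Real.pi * y)) (-(Real.pi * Real.sin (Real.pi * x))) x := by
  have h := (Real.hasDerivAt_cos (Real.pi * x)).comp x ((hasDerivAt_id x).const_mul Real.pi)
  simpa [Function.comp_def, mul_comm] using h

lemma hasDerivAt_f1 (lam mu x : ℝ) : HasDerivAt (f1 lam mu) (d1 lam mu x) x := by
  have hc := hasDerivAt_cospi x
  have hs := hasDerivAt_sinpi x
  have hx : HasDerivAt (fun y : ℝ => Real.pi * y) Real.pi x := by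
    simpa using (hasDerivAt_id x).const_mul Real.pi
  have h1 : HasDerivAt (fun y => 1 - 2 * (lam + mu) * Real.cos (Real.pi * y))
      (0 - 2 * (lam + mu) * -(Real.pi * Real.sin (Real.pi * x))) x :=
    (hasDerivAt_const x 1).sub (hc.const_mul (2 * (lam + mu)))
  have h2 : HasDerivAt (fun y => Real.pi * y * Real.sin (Real.pi * y))
      (Real.pi * Real.sin (Real.pi * x) + Real.pi * x * (Real.pi * Real.cos (Real.pi * x))) x :=
    hx.mul hs
  have h3 : HasDerivAt
      (fun y => 2 * (2 * Real.cos (Real.pi * y) - Real.pi * y * Real.sin (Real.pi * y)) * (lam * mu))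
      (2 * (2 * -(Real.pi * Real.sin (Real.pi * x)) -
        (Real.pi * Real.sin (Real.pi * x) + Real.pi * x * (Real.pi * Real.cos (Real.pi * x)))) * (lam * mu)) x := by
    exact (((hc.const_mul 2).sub h2).const_mul 2).mul_const (lam * mu)
  have := h1.add h3
  exact this.congr_deriv (by unfold d1; ring)

lemma hasDerivAt_f2 (lam mu x : ℝ) : HasDerivAt (f2 lam mu) (d2 lam mu x) x := by
  have hs := hasDerivAt_sinpi x
  have hx : HasDerivAt (fun y : ℝ => 2 * Real.pi * (y - 1) * (lam * mu)) (2 * Real.pi * (lam * mu)) x := by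
    have := (((hasDerivAt_id x).sub_const 1).const_mul (2 * Real.pi)).mul_const (lam * mu)
    simpa [mul_one] using this
  have h := hx.mul hs
  have := (hasDerivAt_const x (1:ℝ)).add h
  exact this.congr_deriv (by unfold d2; ring)

lemma cont_d1 (lam mu : ℝ) : Continuous (d1 lam mu) := by
  unfold d1; fun_prop

lemma cont_d2 (lam mu : ℝ) : Continuous (d2 lam mu) := by
  unfold d2; fun_prop

lemma g_meas (lam mu : ℝ) : Measurable (g lam mu) := by
  unfold g
  exact Measurable.ite (measurableSet_le measurable_id measurable_const) measurable_const
    (Measurable.ite (measurableSet_le measurable_id measurable_const) (cont_d1 lam mu).measurable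
      (Measurable.ite (measurableSet_le measurable_id measurable_const)
        (cont_d2 lam mu).measurable measurable_const))

lemma sin_ge_mul_cos {t : ℝ} (h0 : 0 ≤ t) (h1 : t ≤ Real.pi / 2) :
    t * Real.cos t ≤ Real.sin t := by
  rcases eq_or_lt_of_le h1 with h | h
  · rw [h, Real.cos_pi_div_two, mul_zero]
    exact Real.sin_nonneg_of_nonneg_of_le_pi (by positivity)
      (by linarith [Real.pi_pos])
  · rcases eq_or_lt_of_le h0 with h0' | h0'
    · simp [← h0']
    · have hcos : 0 < Real.cos t := Real.cos_pos_of_mem_Ioo ⟨by linarith [Real.pi_pos], h⟩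
      have ht := Real.lt_tan h0' h
      rw [Real.tan_eq_sin_div_cos, lt_div_iff₀ hcos] at ht
      exact ht.le

lemma g_nonneg (lam mu : ℝ) (hl0 : 0 ≤ lam) (hl1 : lam ≤ 1/2)
    (hm0 : 0 ≤ mu) (hm1 : mu ≤ 1/2) (x : ℝ) : 0 ≤ g lam mu x := by
  unfold g
  split_ifs with h0 h2 h3
  · exact le_refl _
  · push_neg at h0
    have hx1 : Real.pi * x ≤ Real.pi / 2 := by
      nlinarith [Real.pi_pos]
    have key : (Real.pi * x) * Real.cos (Real.pi * x) ≤ Real.sin (Real.pi * x) :=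
      sin_ge_mul_cos (by positivity) hx1
    have hs : 0 ≤ Real.sin (Real.pi * x) :=
      Real.sin_nonneg_of_nonneg_of_le_pi (by positivity) (by nlinarith [Real.pi_pos])
    have h4 : 4 * lam * mu ≤ lam + mu := by nlinarith
    have h5 : 0 ≤ 2 * Real.pi * Real.sin (Real.pi * x) * (lam + mu - 4 * lam * mu) :=
      mul_nonneg (mul_nonneg (by positivity) hs) (by linarith)
    have h6 : 0 ≤ 2 * Real.pi * lam * mu *
        (Real.sin (Real.pi * x) - Real.pi * x * Real.cos (Real.pi * x)) :=
      mul_nonneg (by positivity) (by nlinarith [key])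
    unfold d1
    nlinarith [h5, h6]
  · push_neg at h0 h2
    have hs : 0 ≤ Real.sin (Real.pi * x) :=
      Real.sin_nonneg_of_nonneg_of_le_pi (by positivity) (by nlinarith [Real.pi_pos])
    have hc : Real.cos (Real.pi * x) ≤ 0 :=
      Real.cos_nonpos_of_pi_div_two_le_of_le (by nlinarith [Real.pi_pos])
        (by nlinarith [Real.pi_pos])
    have h7 : Real.pi * (1 - x) * Real.cos (Real.pi * x) ≤ 0 :=
      mul_nonpos_of_nonneg_of_nonpos (mul_nonneg Real.pi_pos.le (by linarith)) hc
    unfold d2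
    exact mul_nonneg (by positivity) (by linarith)
  · exact le_refl _

noncomputable def Gf (lam mu x : ℝ) : ℝ :=
  if x ≤ 0 then (1-2*lam)*(1-2*mu) else if x ≤ 1/2 then f1 lam mu x
  else if x ≤ 1 then f2 lam mu x else 1

lemma f1_zero (lam mu : ℝ) : f1 lam mu 0 = (1-2*lam)*(1-2*mu) := by
  unfold f1; simp; ring

lemma f1_half (lam mu : ℝ) : f1 lam mu (1/2) = f2 lam mu (1/2) := by
  unfold f1 f2
  have h : Real.pi * (1/2) = Real.pi / 2 := by ring
  rw [h, Real.cos_pi_div_two, Real.sin_pi_div_two]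
  ring

lemma f2_one (lam mu : ℝ) : f2 lam mu 1 = 1 := by
  unfold f2; rw [mul_one, Real.sin_pi]; ring

lemma g_integrableOn1 (lam mu : ℝ) : IntegrableOn (g lam mu) (Ioc 0 (1/2)) := by
  refine ((cont_d1 lam mu).integrableOn_Ioc).congr_fun ?_ measurableSet_Ioc
  intro t ht
  unfold g
  rw [if_neg (not_le.2 ht.1), if_pos ht.2]

lemma g_integrableOn2 (lam mu : ℝ) : IntegrableOn (g lam mu) (Ioc (1/2) 1) := by
  refine ((cont_d2 lam mu).integrableOn_Ioc).congr_fun ?_ measurableSet_Ioc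
  intro t ht
  unfold g
  rw [if_neg (by linarith [ht.1] : ¬ t ≤ 0), if_neg (not_le.2 ht.1), if_pos ht.2]

lemma g_eq_indicator (lam mu : ℝ) :
    g lam mu = (Ioc (0:ℝ) 1).indicator (g lam mu) := by
  funext x
  by_cases hx : x ∈ Ioc (0:ℝ) 1
  · rw [Set.indicator_of_mem hx]
  · rw [Set.indicator_of_notMem hx]
    unfold g
    simp only [mem_Ioc, not_and_or, not_lt, not_le] at hx
    rcases hx with h | h
    · rw [if_pos h]
    · rw [if_neg (by linarith : ¬ x ≤ 0), if_neg (by linarith : ¬ x ≤ 1/2),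
        if_neg (by linarith : ¬ x ≤ 1)]

lemma g_integrable (lam mu : ℝ) : Integrable (g lam mu) := by
  rw [g_eq_indicator]
  rw [integrable_indicator_iff measurableSet_Ioc]
  have : Ioc (0:ℝ) 1 = Ioc 0 (1/2) ∪ Ioc (1/2) 1 := by
    rw [Set.Ioc_union_Ioc_eq_Ioc] <;> norm_num
  rw [this]
  exact (g_integrableOn1 lam mu).union (g_integrableOn2 lam mu)

lemma g_intInt (lam mu a b : ℝ) : IntervalIntegrable (g lam mu) volume a b :=
  (g_integrable lam mu).intervalIntegrable

lemma integral_g1 (lam mu : ℝ) {x : ℝ} (hx0 : 0 ≤ x) (hx : x ≤ 1/2) :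
    ∫ t in (0:ℝ)..x, g lam mu t = f1 lam mu x - (1-2*lam)*(1-2*mu) := by
  have h1 : ∫ t in (0:ℝ)..x, g lam mu t = ∫ t in (0:ℝ)..x, d1 lam mu t := by
    apply intervalIntegral.integral_congr
    intro t ht
    rw [Set.uIcc_of_le hx0] at ht
    unfold g
    by_cases h : t ≤ 0
    · have ht0 : t = 0 := le_antisymm h ht.1
      subst ht0
      rw [if_pos le_rfl]
      unfold d1; simp
    · rw [if_neg h, if_pos (le_trans ht.2 hx)]
  rw [h1, intervalIntegral.integral_eq_sub_of_hasDerivAt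
    (fun t _ => hasDerivAt_f1 lam mu t) ((cont_d1 lam mu).intervalIntegrable _ _), f1_zero]

lemma integral_g2 (lam mu : ℝ) {x : ℝ} (hx0 : 1/2 ≤ x) (hx : x ≤ 1) :
    ∫ t in (1/2:ℝ)..x, g lam mu t = f2 lam mu x - f2 lam mu (1/2) := by
  have h1 : ∫ t in (1/2:ℝ)..x, g lam mu t = ∫ t in (1/2:ℝ)..x, d2 lam mu t := by
    apply intervalIntegral.integral_congr_ae
    refine Filter.Eventually.of_forall (fun t ht => ?_)
    rw [Set.uIoc_of_le hx0] at ht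
    unfold g
    rw [if_neg (by linarith [ht.1] : ¬ t ≤ 0), if_neg (not_le.2 ht.1),
      if_pos (le_trans ht.2 hx)]
  rw [h1, intervalIntegral.integral_eq_sub_of_hasDerivAt
    (fun t _ => hasDerivAt_f2 lam mu t) ((cont_d2 lam mu).intervalIntegrable _ _)]

lemma integral_g_H (lam mu : ℝ) (x : ℝ) :
    ∫ t in (0:ℝ)..x, g lam mu t = Gf lam mu x - (1-2*lam)*(1-2*mu) := by
  by_cases h0 : x ≤ 0
  · rw [Gf, if_pos h0, sub_self]
    have h1 : ∫ t in (0:ℝ)..x, g lam mu t = ∫ t in (0:ℝ)..x, (0:ℝ) := by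
      apply intervalIntegral.integral_congr
      intro t ht
      rw [Set.uIcc_of_ge h0] at ht
      unfold g
      rw [if_pos ht.2]
    rw [h1, intervalIntegral.integral_zero]
  push_neg at h0
  by_cases h2 : x ≤ 1/2
  · rw [integral_g1 lam mu h0.le h2, Gf, if_neg (not_le.2 h0), if_pos h2]
  push_neg at h2
  by_cases h3 : x ≤ 1
  · rw [← intervalIntegral.integral_add_adjacent_intervals (g_intInt lam mu 0 (1/2))
      (g_intInt lam mu (1/2) x),
      integral_g1 lam mu (by norm_num) le_rfl, integral_g2 lam mu h2.le h3,
      f1_half, Gf, if_neg (not_le.2 h0), if_neg (not_le.2 h2), if_pos h3]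
    ring
  push_neg at h3
  rw [← intervalIntegral.integral_add_adjacent_intervals (g_intInt lam mu 0 1)
    (g_intInt lam mu 1 x),
    ← intervalIntegral.integral_add_adjacent_intervals (g_intInt lam mu 0 (1/2))
    (g_intInt lam mu (1/2) 1),
    integral_g1 lam mu (by norm_num) le_rfl,
    integral_g2 lam mu (by norm_num) le_rfl, f1_half, f2_one]
  have h4 : ∫ t in (1:ℝ)..x, g lam mu t = ∫ t in (1:ℝ)..x, (0:ℝ) := by
    apply intervalIntegral.integral_congr_ae
    refine Filter.Eventually.of_forall (fun t ht => ?_)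
    rw [Set.uIoc_of_le h3.le] at ht
    unfold g
    rw [if_neg (by linarith [ht.1] : ¬ t ≤ 0), if_neg (by linarith [ht.1] : ¬ t ≤ 1/2),
      if_neg (not_le.2 ht.1)]
  rw [h4, intervalIntegral.integral_zero, Gf, if_neg (not_le.2 h0),
    if_neg (by linarith : ¬ x ≤ 1/2), if_neg (not_le.2 h3)]
  ring

lemma integral_g_key (lam mu a b : ℝ) :
    ∫ t in a..b, g lam mu t = Gf lam mu b - Gf lam mu a := by
  rw [← intervalIntegral.integral_add_adjacent_intervals (g_intInt lam mu a 0)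
    (g_intInt lam mu 0 b), intervalIntegral.integral_symm,
    integral_g_H lam mu a, integral_g_H lam mu b]
  ring

lemma F_eq (lam mu : ℝ) (F : StieltjesFunction ℝ)
    (hF : ∀ x : ℝ, F x =
      if x < 0 then 0
      else if x < 1/2 then
        1 - 2 * (lam + mu) * Real.cos (Real.pi * x) +
          2 * (2 * Real.cos (Real.pi * x) - Real.pi * x * Real.sin (Real.pi * x)) * (lam * mu)
      else if x < 1 then 1 + 2 * Real.pi * (x - 1) * (lam * mu) * Real.sin (Real.pi * x)
      else 1) (x : ℝ) :
    F x = Gf lam mu x - (if x < 0 then (1-2*lam)*(1-2*mu) else 0) := by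
  rw [hF x]
  unfold Gf
  by_cases h0 : x < 0
  · rw [if_pos h0, if_pos h0, if_pos h0.le]; ring
  push_neg at h0
  rw [if_neg (not_lt.2 h0), if_neg (not_lt.2 h0), sub_zero]
  by_cases h1 : x ≤ 0
  · have hx0 : x = 0 := le_antisymm h1 h0
    subst hx0
    rw [if_pos le_rfl, if_pos (by norm_num : (0:ℝ) < 1/2)]
    have := f1_zero lam mu
    unfold f1 at this
    linarith [this]
  rw [if_neg h1]
  by_cases h2 : x < 1/2
  · rw [if_pos h2, if_pos h2.le]
    rfl
  push_neg at h2
  rw [if_neg (not_lt.2 h2)]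
  by_cases h3 : x ≤ 1/2
  · have hx : x = 1/2 := le_antisymm h3 h2
    subst hx
    rw [if_pos le_rfl, if_pos (by norm_num : (1:ℝ)/2 < 1)]
    rw [f1_half]
    rfl
  rw [if_neg h3]
  by_cases h4 : x < 1
  · rw [if_pos h4, if_pos h4.le]
    rfl
  push_neg at h4
  rw [if_neg (not_lt.2 h4)]
  by_cases h5 : x ≤ 1
  · have hx : x = 1 := le_antisymm h5 h4
    subst hx
    rw [if_pos le_rfl]
    rw [f2_one]
  · rw [if_neg h5]

lemma Gf_diff_nonneg (lam mu : ℝ) (hl0 : 0 ≤ lam) (hl1 : lam ≤ 1/2)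
    (hm0 : 0 ≤ mu) (hm1 : mu ≤ 1/2) {a b : ℝ} (hab : a ≤ b) :
    0 ≤ Gf lam mu b - Gf lam mu a := by
  rw [← integral_g_key lam mu a b]
  exact intervalIntegral.integral_nonneg hab (fun x _ => g_nonneg lam mu hl0 hl1 hm0 hm1 x)

lemma measure_eq (lam mu : ℝ) (hl0 : 0 ≤ lam) (hl1 : lam ≤ 1/2)
    (hm0 : 0 ≤ mu) (hm1 : mu ≤ 1/2) (F : StieltjesFunction ℝ)
    (hF : ∀ x : ℝ, F x =
      if x < 0 then 0
      else if x < 1/2 then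
        1 - 2 * (lam + mu) * Real.cos (Real.pi * x) +
          2 * (2 * Real.cos (Real.pi * x) - Real.pi * x * Real.sin (Real.pi * x)) * (lam * mu)
      else if x < 1 then 1 + 2 * Real.pi * (x - 1) * (lam * mu) * Real.sin (Real.pi * x)
      else 1) :
    F.measure = ENNReal.ofReal ((1-2*lam)*(1-2*mu)) • Measure.dirac 0
      + volume.withDensity (fun x => ENNReal.ofReal (g lam mu x)) := by
  have hc : 0 ≤ (1-2*lam)*(1-2*mu) := mul_nonneg (by linarith) (by linarith)
  refine Measure.ext_of_Ioc _ _ (fun a b hab => ?_)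
  rw [F.measure_Ioc, Measure.add_apply, Measure.smul_apply,
    Measure.dirac_apply' _ measurableSet_Ioc, withDensity_apply _ measurableSet_Ioc,
    ← ofReal_integral_eq_lintegral_ofReal ((g_integrable lam mu).integrableOn)
      (Filter.Eventually.of_forall (fun x => g_nonneg lam mu hl0 hl1 hm0 hm1 x)),
    ← intervalIntegral.integral_of_le hab.le, integral_g_key lam mu a b]
  have hGd := Gf_diff_nonneg lam mu hl0 hl1 hm0 hm1 hab.le
  rw [F_eq lam mu F hF a, F_eq lam mu F hF b]
  by_cases hb : b < 0
  · have ha : a < 0 := lt_trans hab hb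
    rw [if_pos ha, if_pos hb,
      Set.indicator_of_notMem (by simp [mem_Ioc]; intro h; linarith)]
    simp only [smul_eq_mul, mul_zero, zero_add]
    ring_nf
  push_neg at hb
  by_cases ha : a < 0
  · rw [if_pos ha, if_neg (not_lt.2 hb),
      Set.indicator_of_mem (by exact ⟨ha, hb⟩ : (0:ℝ) ∈ Ioc a b)]
    have : Gf lam mu b - 0 - (Gf lam mu a - (1-2*lam)*(1-2*mu))
        = (1-2*lam)*(1-2*mu) + (Gf lam mu b - Gf lam mu a) := by ring
    rw [this, ENNReal.ofReal_add hc hGd]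
    simp [add_comm]
  · rw [if_neg ha, if_neg (not_lt.2 hb),
      Set.indicator_of_notMem (by simp [mem_Ioc]; intro h; linarith [not_lt.1 ha])]
    simp only [smul_eq_mul, mul_zero, zero_add, sub_zero]

end Stmt11

open Stmt11
theorem stmt_11 (lam mu : ℝ) (hl0 : 0 ≤ lam) (hl1 : lam ≤ 1/2)
    (hm0 : 0 ≤ mu) (hm1 : mu ≤ 1/2)
    (F : StieltjesFunction ℝ)
    (hF : ∀ x : ℝ, F x =
      if x < 0 then 0
      else if x < 1/2 then
        1 - 2 * (lam + mu) * Real.cos (Real.pi * x) +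
          2 * (2 * Real.cos (Real.pi * x) - Real.pi * x * Real.sin (Real.pi * x)) * (lam * mu)
      else if x < 1 then 1 + 2 * Real.pi * (x - 1) * (lam * mu) * Real.sin (Real.pi * x)
      else 1)
    (k : ℕ) (hk : 1 ≤ k) :
    ∫ x, x^k ∂F.measure =
      (2 * Real.pi * (lam + mu) - 6 * Real.pi * lam * mu) *
          (∫ x in (0:ℝ)..(1/2), x^k * Real.sin (Real.pi * x)) -
        2 * Real.pi^2 * lam * mu *
          (∫ x in (0:ℝ)..(1/2), x^(k+1) * Real.cos (Real.pi * x)) +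
        2 * Real.pi * lam * mu *
          (∫ x in (1/2:ℝ)..1,
            x^k * (Real.sin (Real.pi * x) - Real.pi * (1 - x) * Real.cos (Real.pi * x))) := by
  have hk0 : k ≠ 0 := by omega
  have hgmeas : Measurable (fun x => (g lam mu x).toNNReal) :=
    (g_meas lam mu).real_toNNReal
  have hgsm : (fun x => g lam mu x * x ^ k)
      = fun x => (g lam mu x).toNNReal • x ^ k := by
    funext x
    rw [NNReal.smul_def, smul_eq_mul,
      Real.coe_toNNReal _ (g_nonneg lam mu hl0 hl1 hm0 hm1 x)]
  have hind : (fun x => g lam mu x * x ^ k)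
      = (Ioc (0:ℝ) 1).indicator (fun x => g lam mu x * x ^ k) := by
    funext x
    by_cases hx : x ∈ Ioc (0:ℝ) 1
    · rw [Set.indicator_of_mem hx]
    · rw [Set.indicator_of_notMem hx]
      have hg0 : g lam mu x = 0 := by
        conv_lhs => rw [g_eq_indicator lam mu]
        rw [Set.indicator_of_notMem hx]
      rw [hg0, zero_mul]
  have hsplit : Ioc (0:ℝ) 1 = Ioc 0 (1/2) ∪ Ioc (1/2) 1 := by
    rw [Set.Ioc_union_Ioc_eq_Ioc] <;> norm_num
  have hIOn1 : IntegrableOn (fun x => g lam mu x * x ^ k) (Ioc (0:ℝ) (1/2)) := by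
    refine (((cont_d1 lam mu).mul (continuous_pow k)).integrableOn_Ioc).congr_fun
      ?_ measurableSet_Ioc
    intro t ht
    simp only
    rw [show g lam mu t = d1 lam mu t from by
      unfold g; rw [if_neg (not_le.2 ht.1), if_pos ht.2]]
    rfl
  have hIOn2 : IntegrableOn (fun x => g lam mu x * x ^ k) (Ioc (1/2:ℝ) 1) := by
    refine (((cont_d2 lam mu).mul (continuous_pow k)).integrableOn_Ioc).congr_fun
      ?_ measurableSet_Ioc
    intro t ht
    simp only
    rw [show g lam mu t = d2 lam mu t from by
      unfold g; rw [if_neg (by linarith [ht.1] : ¬ t ≤ 0), if_neg (not_le.2 ht.1),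
        if_pos ht.2]]
    rfl
  have hintgmul : Integrable (fun x => g lam mu x * x ^ k) := by
    rw [hind, integrable_indicator_iff measurableSet_Ioc, hsplit]
    exact hIOn1.union hIOn2
  rw [measure_eq lam mu hl0 hl1 hm0 hm1 F hF]
  have hint1 : Integrable (fun x : ℝ => x ^ k)
      (ENNReal.ofReal ((1-2*lam)*(1-2*mu)) • Measure.dirac 0) := by
    refine Integrable.smul_measure ?_ ENNReal.ofReal_ne_top
    refine ⟨(measurable_id.pow_const k).aestronglyMeasurable, ?_⟩
    rw [hasFiniteIntegral_def, lintegral_dirac]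
    exact ENNReal.coe_lt_top
  have hwd : (volume.withDensity fun x => ENNReal.ofReal (g lam mu x))
      = volume.withDensity fun x => ((g lam mu x).toNNReal : ENNReal) := rfl
  have hint2 : Integrable (fun x : ℝ => x ^ k)
      (volume.withDensity fun x => ENNReal.ofReal (g lam mu x)) := by
    rw [hwd, integrable_withDensity_iff_integrable_smul hgmeas]
    rw [← hgsm]
    exact hintgmul
  rw [integral_add_measure hint1 hint2, integral_smul_measure]
  have hdirac : ∫ x : ℝ, x ^ k ∂(Measure.dirac 0) = 0 := by
    rw [integral_dirac]
    exact zero_pow hk0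
  rw [hdirac, smul_zero, zero_add, hwd,
    integral_withDensity_eq_integral_smul hgmeas, ← hgsm, hind,
    integral_indicator measurableSet_Ioc, hsplit,
    setIntegral_union (Set.Ioc_disjoint_Ioc_of_le le_rfl) measurableSet_Ioc hIOn1 hIOn2,
    ← intervalIntegral.integral_of_le (by norm_num : (0:ℝ) ≤ 1/2),
    ← intervalIntegral.integral_of_le (by norm_num : (1/2:ℝ) ≤ 1)]
  have e1 : ∫ x in (0:ℝ)..(1/2), g lam mu x * x ^ k
      = (2 * Real.pi * (lam + mu) - 6 * Real.pi * lam * mu) *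
          (∫ x in (0:ℝ)..(1/2), x^k * Real.sin (Real.pi * x)) -
        2 * Real.pi^2 * lam * mu *
          (∫ x in (0:ℝ)..(1/2), x^(k+1) * Real.cos (Real.pi * x)) := by
    rw [← intervalIntegral.integral_const_mul, ← intervalIntegral.integral_const_mul,
      ← intervalIntegral.integral_sub
        ((Continuous.intervalIntegrable (by fun_prop) _ _))
        ((Continuous.intervalIntegrable (by fun_prop) _ _))]
    apply intervalIntegral.integral_congr
    intro t ht
    rw [Set.uIcc_of_le (by norm_num : (0:ℝ) ≤ 1/2)] at ht
    have hg : g lam mu t = d1 lam mu t := by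
      unfold g
      by_cases h : t ≤ 0
      · have ht0 : t = 0 := le_antisymm h ht.1
        subst ht0
        rw [if_pos le_rfl]
        unfold d1; simp
      · rw [if_neg h, if_pos ht.2]
    simp only
    rw [hg]
    unfold d1
    rw [pow_succ]
    ring
  have e2 : ∫ x in (1/2:ℝ)..1, g lam mu x * x ^ k
      = 2 * Real.pi * lam * mu *
          (∫ x in (1/2:ℝ)..1,
            x^k * (Real.sin (Real.pi * x) - Real.pi * (1 - x) * Real.cos (Real.pi * x))) := by
    rw [← intervalIntegral.integral_const_mul]
    apply intervalIntegral.integral_congr_ae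
    refine Filter.Eventually.of_forall fun t ht => ?_
    rw [Set.uIoc_of_le (by norm_num : (1/2:ℝ) ≤ 1)] at ht
    have hg : g lam mu t = d2 lam mu t := by
      unfold g
      rw [if_neg (by linarith [ht.1] : ¬ t ≤ 0), if_neg (not_le.2 ht.1), if_pos ht.2]
    rw [hg]
    unfold d2
    ring
  rw [e1, e2]
end
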